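/- arXiv:2506.04692 — 8 statements merged into one kernel-verified Lean document; each statement's English description precedes it below -/
import Mathlib

section
/- For any binary relation R on a set I and ultrafilters u, v on I, the following are equivalent: (1) for all A ∈ u and all B ∈ v there exist a ∈ A and b ∈ B with R a b; (2) for all A ∈ u there exists B ∈ v such that for all b ∈ B there exists a ∈ A with R a b. -/
theorem stmt_0 {I : Type*} (R : I → I → Prop) (u v : Ultrafilter I) :
    (∀ A ∈ u, ∀ B ∈ v, ∃ a ∈ A, ∃ b ∈ B, R a b) ↔
    (∀ A ∈ u, ∃ B ∈ v, ∀ b ∈ B, ∃ a ∈ A, R a b) := by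
  constructor
  · intro h A hA
    refine ⟨{b | ∃ a ∈ A, R a b}, ?_, fun b hb => hb⟩
    by_contra hB
    rw [← Ultrafilter.compl_mem_iff_notMem] at hB
    obtain ⟨a, ha, b, hb, hR⟩ := h A hA _ hB
    exact hb ⟨a, ha, hR⟩
  · intro h A hA B hB
    obtain ⟨B', hB', hall⟩ := h A hA
    obtain ⟨b, hb, hb'⟩ := Ultrafilter.nonempty_of_mem (v.inter_mem hB hB')
    obtain ⟨a, ha, hR⟩ := hall b hb'
    exact ⟨a, ha, b, hb, hR⟩
end

section
/- If R is a transitive binary relation on a set I, then its weak canonical extension R̃ is transitive: for all ultrafilters u, v, w on I, if R̃(u,v) and R̃(v,w) then R̃(u,w). -/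
theorem stmt_4 {I : Type*} (R : I → I → Prop) (hR : Transitive R) (u v w : Ultrafilter I)
    (huv : ∀ A ∈ u, ∀ B ∈ v, ∃ a ∈ A, ∃ b ∈ B, R a b)
    (hvw : ∀ A ∈ v, ∀ B ∈ w, ∃ a ∈ A, ∃ b ∈ B, R a b) :
    ∀ A ∈ u, ∀ B ∈ w, ∃ a ∈ A, ∃ b ∈ B, R a b := by
  intro A hA B hB
  set C : Set I := {b | ∃ a ∈ A, R a b} with hC
  rcases Ultrafilter.mem_or_compl_mem v C with h | h
  · obtain ⟨c, hc, b, hb, hcb⟩ := hvw C h B hB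
    obtain ⟨a, ha, hac⟩ := hc
    exact ⟨a, ha, b, hb, hR hac hcb⟩
  · obtain ⟨a, ha, c, hc, hac⟩ := huv A hA Cᶜ h
    exact absurd ⟨a, ha, hac⟩ hc
end

section
/- If R is an equivalence relation on a set I, then its weak canonical extension R̃ is an equivalence relation on the set of ultrafilters on I. -/
theorem stmt_5 {I : Type*} (R : I → I → Prop) (hR : Equivalence R) :
    Equivalence (fun u v : Ultrafilter I =>
      ∀ A ∈ u, ∀ B ∈ v, ∃ a ∈ A, ∃ b ∈ B, R a b) := by
  constructor
  · intro u A hA B hB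
    obtain ⟨x, hxA, hxB⟩ := Ultrafilter.nonempty_of_mem (Filter.inter_mem hA hB)
    exact ⟨x, hxA, x, hxB, hR.refl x⟩
  · intro u v h A hA B hB
    obtain ⟨b, hb, a, ha, hab⟩ := h B hB A hA
    exact ⟨a, ha, b, hb, hR.symm hab⟩
  · intro u v w huv hvw A hA B hB
    set S : Set I := {x | ∃ a ∈ A, R a x} with hS
    have hSv : S ∈ v := by
      by_contra hnot
      have hSc : Sᶜ ∈ v := (Ultrafilter.compl_mem_iff_notMem).mpr hnot
      obtain ⟨a, ha, c, hc, hac⟩ := huv A hA Sᶜ hSc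
      exact hc ⟨a, ha, hac⟩
    obtain ⟨c, hc, b, hb, hcb⟩ := hvw S hSv B hB
    obtain ⟨a, ha, hac⟩ := hc
    exact ⟨a, ha, b, hb, hR.trans hac hcb⟩
end

section
/- If R is a connected (total) binary relation on a set I, i.e. for all distinct x, y ∈ I either R x y or R y x, then its weak canonical extension R̃ is connected: for all distinct ultrafilters u, v on I, R̃(u,v) or R̃(v,u) holds. -/
theorem stmt_6 {I : Type*} (R : I → I → Prop)
    (hR : ∀ x y : I, x ≠ y → R x y ∨ R y x) (u v : Ultrafilter I) (huv : u ≠ v) :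
    (∀ A ∈ u, ∀ B ∈ v, ∃ a ∈ A, ∃ b ∈ B, R a b) ∨
    (∀ A ∈ v, ∀ B ∈ u, ∃ a ∈ A, ∃ b ∈ B, R a b) := by
  by_contra h
  push_neg at h
  obtain ⟨⟨A, hA, B, hB, h1⟩, ⟨A', hA', B', hB', h2⟩⟩ := h
  -- find a separating set S ∈ u with Sᶜ ∈ v
  obtain ⟨S, hSu, hSv⟩ : ∃ S, S ∈ u ∧ S ∉ v := by
    by_contra hc
    push_neg at hc
    exact huv ((Ultrafilter.coe_le_coe.1 (Filter.le_def.2 hc)).symm ▸ rfl)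
  have hScv : Sᶜ ∈ v := Ultrafilter.compl_mem_iff_notMem.2 hSv
  have ha : (A ∩ B' ∩ S).Nonempty :=
    Ultrafilter.nonempty_of_mem (Filter.inter_mem (Filter.inter_mem hA hB') hSu)
  have hb : (B ∩ A' ∩ Sᶜ).Nonempty :=
    Ultrafilter.nonempty_of_mem (Filter.inter_mem (Filter.inter_mem hB hA') hScv)
  obtain ⟨a, ⟨⟨haA, haB'⟩, haS⟩⟩ := ha
  obtain ⟨b, ⟨⟨hbB, hbA'⟩, hbS⟩⟩ := hb
  have hab : a ≠ b := fun e => hbS (e ▸ haS)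
  rcases hR a b hab with hr | hr
  · exact h1 a haA b hbB hr
  · exact h2 b hbA' a haB' hr
end

section
/- If R is a total preorder on a set I (reflexive, transitive, and connected), then its weak canonical extension R̃ is a total preorder on the ultrafilters on I. -/
theorem stmt_7 {I : Type*} (R : I → I → Prop)
    (hrefl : Reflexive R) (htrans : Transitive R)
    (hconn : ∀ x y : I, x ≠ y → R x y ∨ R y x) :
    Reflexive (fun u v : Ultrafilter I => ∀ A ∈ u, ∀ B ∈ v, ∃ a ∈ A, ∃ b ∈ B, R a b) ∧
    Transitive (fun u v : Ultrafilter I => ∀ A ∈ u, ∀ B ∈ v, ∃ a ∈ A, ∃ b ∈ B, R a b) ∧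
    (∀ u v : Ultrafilter I, u ≠ v →
      (∀ A ∈ u, ∀ B ∈ v, ∃ a ∈ A, ∃ b ∈ B, R a b) ∨
      (∀ A ∈ v, ∀ B ∈ u, ∃ a ∈ A, ∃ b ∈ B, R a b)) := by
  have htot : ∀ x y : I, R x y ∨ R y x := by
    intro x y
    by_cases h : x = y
    · subst h; exact Or.inl (hrefl x)
    · exact hconn x y h
  refine ⟨?_, ?_, ?_⟩
  · intro u A hA B hB
    have h : A ∩ B ∈ u := u.toFilter.inter_sets hA hB
    obtain ⟨a, haA, haB⟩ := u.nonempty_of_mem h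
    exact ⟨a, haA, a, haB, hrefl a⟩
  · intro u v w huv hvw A hA C hC
    by_cases hX : {b | ∃ c ∈ C, R b c} ∈ v
    · obtain ⟨a, haA, b, hbX, hab⟩ := huv A hA _ hX
      obtain ⟨c, hcC, hbc⟩ := hbX
      exact ⟨a, haA, c, hcC, htrans hab hbc⟩
    · have hXc : {b | ∃ c ∈ C, R b c}ᶜ ∈ v := (Ultrafilter.compl_mem_iff_notMem).2 hX
      obtain ⟨b, hbX, c, hcC, hbc⟩ := hvw _ hXc C hC
      exact absurd ⟨c, hcC, hbc⟩ hbX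
  · intro u v _
    by_cases h : ∀ A ∈ u, ∀ B ∈ v, ∃ a ∈ A, ∃ b ∈ B, R a b
    · exact Or.inl h
    · right
      push_neg at h
      obtain ⟨A, hA, B, hB, hnone⟩ := h
      intro A' hA' B' hB'
      obtain ⟨b, hbA', hbB⟩ := v.nonempty_of_mem (v.toFilter.inter_sets hA' hB)
      obtain ⟨a, haB', haA⟩ := u.nonempty_of_mem (u.toFilter.inter_sets hB' hA)
      have : ¬ R a b := hnone a haA b hbB
      rcases htot a b with h1 | h1
      · exact absurd h1 this
      · exact ⟨b, hbA', a, haB', h1⟩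
end

section
/- Let R be a symmetric and transitive binary relation on a set I whose strong canonical extension R^s is reflexive on all ultrafilters. Then R^s is symmetric: for all ultrafilters u, v on I, R^s(u,v) implies R^s(v,u). -/
theorem stmt_12 {I : Type*} (R : I → I → Prop) (hsymm : Symmetric R) (htrans : Transitive R)
    (hrefl : ∀ u : Ultrafilter I, {a : I | {b : I | R a b} ∈ u} ∈ u)
    (u v : Ultrafilter I) (h : {a : I | {b : I | R a b} ∈ v} ∈ u) :
    {a : I | {b : I | R a b} ∈ u} ∈ v := by
  refine Filter.mem_of_superset (hrefl v) ?_
  intro a ha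
  simp only [Set.mem_setOf_eq] at ha ⊢
  refine Filter.mem_of_superset h ?_
  intro c hc
  simp only [Set.mem_setOf_eq] at hc
  have : ({b | R a b} ∩ {b | R c b} : Set I) ∈ v := Filter.inter_mem ha hc
  obtain ⟨b, hab, hcb⟩ := Ultrafilter.nonempty_of_mem this
  exact htrans hab (hsymm hcb)
end

section
/- Let R be an equivalence relation on a set I. Then the strong canonical extension R^s is an equivalence relation on the ultrafilters on I if and only if R^s is reflexive (i.e. R^s(u,u) holds for every ultrafilter u on I). -/
theorem stmt_13 {I : Type*} (R : I → I → Prop) (hR : Equivalence R) :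
    Equivalence (fun u v : Ultrafilter I => {a : I | {b : I | R a b} ∈ v} ∈ u) ↔
    (∀ u : Ultrafilter I, {a : I | {b : I | R a b} ∈ u} ∈ u) := by
  constructor
  · intro h u; exact h.refl u
  · intro hrefl
    have cl_eq : ∀ a b, R a b → {c | R a c} = {c | R b c} := by
      intro a b hab
      ext c
      exact ⟨fun h => hR.trans (hR.symm hab) h, fun h => hR.trans hab h⟩
    -- key: if B is saturated and B ∈ v, then T(v) ⊆ B
    have key : ∀ (v : Ultrafilter I) (B : Set I),
        (∀ a b, R a b → a ∈ B → b ∈ B) → B ∈ v →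
        {a : I | {b : I | R a b} ∈ v} ⊆ B := by
      intro v B hsat hB a ha
      have hne : ({b | R a b} ∩ B : Set I).Nonempty :=
        Ultrafilter.nonempty_of_mem (v.inter_mem ha hB)
      obtain ⟨b, hb1, hb2⟩ := hne
      exact hsat b a (hR.symm hb1) hb2
    refine ⟨fun u => hrefl u, ?_, ?_⟩
    · intro u v huv
      by_contra hvu
      have hc : {a : I | {b : I | R a b} ∈ u}ᶜ ∈ v :=
        Ultrafilter.compl_mem_iff_notMem.mpr hvu
      have hsatc : ∀ a b, R a b → a ∈ {a : I | {b : I | R a b} ∈ u}ᶜ →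
          b ∈ {a : I | {b : I | R a b} ∈ u}ᶜ := by
        intro a b hab ha hb
        exact ha (by simpa [cl_eq a b hab] using hb)
      have hsub := key v _ hsatc hc
      have hne : ({a : I | {b : I | R a b} ∈ v} ∩ {a : I | {b : I | R a b} ∈ u} : Set I).Nonempty :=
        Ultrafilter.nonempty_of_mem (u.inter_mem huv (hrefl u))
      obtain ⟨a, ha1, ha2⟩ := hne
      exact hsub ha1 ha2
    · intro u v w huv hvw
      have hsat : ∀ a b, R a b → a ∈ {a : I | {b : I | R a b} ∈ w} →
          b ∈ {a : I | {b : I | R a b} ∈ w} := by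
        intro a b hab ha
        simpa [← cl_eq a b hab] using ha
      have hsub := key v _ hsat hvw
      exact u.sets_of_superset huv hsub
end

section
/- Let R be a total preorder on a set I (reflexive, transitive, connected) whose strong canonical extension R^s is reflexive on all ultrafilters. Then R^s is a total preorder on the ultrafilters on I: reflexive, transitive, and for all distinct ultrafilters u, v, R^s(u,v) or R^s(v,u). -/
theorem stmt_14 {I : Type*} (R : I → I → Prop)
    (hrefl : Reflexive R) (htrans : Transitive R)
    (hconn : ∀ x y : I, x ≠ y → R x y ∨ R y x)
    (hsrefl : ∀ u : Ultrafilter I, {a : I | {b : I | R a b} ∈ u} ∈ u) :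
    Reflexive (fun u v : Ultrafilter I => {a : I | {b : I | R a b} ∈ v} ∈ u) ∧
    Transitive (fun u v : Ultrafilter I => {a : I | {b : I | R a b} ∈ v} ∈ u) ∧
    (∀ u v : Ultrafilter I, u ≠ v →
      {a : I | {b : I | R a b} ∈ v} ∈ u ∨ {a : I | {b : I | R a b} ∈ u} ∈ v) := by
  have htot : ∀ x y : I, R x y ∨ R y x := by
    intro x y
    by_cases h : x = y
    · subst h; exact Or.inl (hrefl x)
    · exact hconn x y h
  refine ⟨hsrefl, ?_, ?_⟩
  · intro u v w huv hvw
    refine Filter.mem_of_superset huv ?_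
    intro a ha
    have h2 : {b : I | {c : I | R b c} ∈ w} ∩ {b : I | R a b} ∈ v :=
      Filter.inter_mem hvw ha
    obtain ⟨b, hb1, hb2⟩ := Ultrafilter.nonempty_of_mem h2
    exact Filter.mem_of_superset hb1 (fun c hc => htrans hb2 hc)
  · intro u v _
    by_contra h
    push_neg at h
    obtain ⟨h1, h2⟩ := h
    have h1' : {a : I | {b : I | R a b} ∉ v} ∈ u := (Ultrafilter.compl_mem_iff_notMem.mpr h1)
    have h2' : {b : I | {a : I | R b a} ∉ u} ∈ v := (Ultrafilter.compl_mem_iff_notMem.mpr h2)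
    -- from ¬({a | R b a} ∈ u), get {a | R a b} ∈ u by totality
    have h2'' : {b : I | {a : I | R a b} ∈ u} ∈ v := by
      refine Filter.mem_of_superset h2' ?_
      intro b hb
      have : {a : I | R b a}ᶜ ∈ u := Ultrafilter.compl_mem_iff_notMem.mpr hb
      refine Filter.mem_of_superset this ?_
      intro a ha
      exact (htot a b).resolve_right ha
    -- show {b | {b' | R b b'} ∉ v} ∈ v, contradicting hsrefl v
    have key : {b : I | {b' : I | R b b'} ∉ v} ∈ v := by
      refine Filter.mem_of_superset h2'' ?_
      intro b hb
      have hab : {a : I | R a b} ∩ {a : I | {b' : I | R a b'} ∉ v} ∈ u :=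
        Filter.inter_mem hb h1'
      obtain ⟨a, ha1, ha2⟩ := Ultrafilter.nonempty_of_mem hab
      intro hbb
      exact ha2 (Filter.mem_of_superset hbb (fun c hc => htrans ha1 hc))
    have := Filter.inter_mem key (hsrefl v)
    obtain ⟨b, hb1, hb2⟩ := Ultrafilter.nonempty_of_mem this
    exact hb1 hb2
end
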